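/- Let V be a finite set, let f : 2^V → ℤ be a skew-supermodular function, and let F be a finite multiset of hyperedges on V (each hyperedge a nonempty subset of V). Then the residual requirement function g : 2^V → ℤ defined by g(S) = f(S) − |δ_F(S)| is skew-supermodular. -/
import Mathlib


open Finset

/-- Skew-supermodularity of an integer-valued set function. -/
def SkewSupermodular {V : Type*} [DecidableEq V] (f : Finset V → ℤ) : Prop :=
  ∀ A B : Finset V,
    f A + f B ≤ f (A ∩ B) + f (A ∪ B) ∨ f A + f B ≤ f (A \ B) + f (B \ A)

/-- The cut value `|δ_F(S)|` of a multiset of hyperedges, encoded as an indexed family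
`H : ι → Finset V` (the index type `ι` accounts for multiplicity). -/
def hyperCut {V ι : Type*} [DecidableEq V] [Fintype ι] (H : ι → Finset V) (S : Finset V) : ℤ :=
  ((Finset.univ.filter (fun i => (H i ∩ S).Nonempty ∧ (H i \ S).Nonempty)).card : ℤ)

section Aux

variable {V : Type*} [DecidableEq V]

/-- `h` crosses `S`. -/
def crossP (h S : Finset V) : Prop := (h ∩ S).Nonempty ∧ (h \ S).Nonempty

instance (h S : Finset V) : Decidable (crossP h S) := by unfold crossP; infer_instance

/-- Crossing indicator. -/
def indC (h S : Finset V) : ℤ := if crossP h S then 1 else 0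

lemma cross_both_inter_union {h A B : Finset V}
    (h1 : crossP h (A ∩ B)) (h2 : crossP h (A ∪ B)) : crossP h A ∧ crossP h B := by
  obtain ⟨⟨x, hx⟩, -⟩ := h1
  obtain ⟨-, ⟨v, hv⟩⟩ := h2
  simp only [mem_inter, mem_sdiff, mem_union] at hx hv
  push_neg at hv
  exact ⟨⟨⟨x, by simp [mem_inter, hx.1, hx.2.1]⟩, ⟨v, by simp [mem_sdiff, hv.1, hv.2.1]⟩⟩,
    ⟨⟨x, by simp [mem_inter, hx.1, hx.2.2]⟩, ⟨v, by simp [mem_sdiff, hv.1, hv.2.2]⟩⟩⟩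

lemma cross_or_inter_union {h A B : Finset V}
    (h1 : crossP h (A ∩ B) ∨ crossP h (A ∪ B)) : crossP h A ∨ crossP h B := by
  rcases h1 with ⟨⟨x, hx⟩, ⟨y, hy⟩⟩ | ⟨⟨x, hx⟩, ⟨y, hy⟩⟩ <;>
    simp only [mem_inter, mem_sdiff, mem_union] at hx hy <;> push_neg at hy
  · by_cases hyA : y ∈ A
    · exact Or.inr ⟨⟨x, by simp [mem_inter, hx.1, hx.2.2]⟩,
        ⟨y, by simp [mem_sdiff, hy.1, hy.2 hyA]⟩⟩
    · exact Or.inl ⟨⟨x, by simp [mem_inter, hx.1, hx.2.1]⟩, ⟨y, by simp [mem_sdiff, hy.1, hyA]⟩⟩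
  · rcases hx.2 with hxA | hxB
    · exact Or.inl ⟨⟨x, by simp [mem_inter, hx.1, hxA]⟩, ⟨y, by simp [mem_sdiff, hy.1, hy.2.1]⟩⟩
    · exact Or.inr ⟨⟨x, by simp [mem_inter, hx.1, hxB]⟩, ⟨y, by simp [mem_sdiff, hy.1, hy.2.2]⟩⟩

lemma cross_both_sdiff {h A B : Finset V}
    (h1 : crossP h (A \ B)) (h2 : crossP h (B \ A)) : crossP h A ∧ crossP h B := by
  obtain ⟨⟨x, hx⟩, -⟩ := h1
  obtain ⟨⟨u, hu⟩, -⟩ := h2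
  simp only [mem_inter, mem_sdiff] at hx hu
  exact ⟨⟨⟨x, by simp [mem_inter, hx.1, hx.2.1]⟩, ⟨u, by simp [mem_sdiff, hu.1, hu.2.2]⟩⟩,
    ⟨⟨u, by simp [mem_inter, hu.1, hu.2.1]⟩, ⟨x, by simp [mem_sdiff, hx.1, hx.2.2]⟩⟩⟩

lemma cross_or_sdiff {h A B : Finset V}
    (h1 : crossP h (A \ B) ∨ crossP h (B \ A)) : crossP h A ∨ crossP h B := by
  rcases h1 with ⟨⟨x, hx⟩, ⟨y, hy⟩⟩ | ⟨⟨x, hx⟩, ⟨y, hy⟩⟩ <;>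
    simp only [mem_inter, mem_sdiff, not_and, not_not] at hx hy
  · by_cases hyA : y ∈ A
    · exact Or.inr ⟨⟨y, by simp [mem_inter, hy.1, hy.2 hyA]⟩,
        ⟨x, by simp [mem_sdiff, hx.1, hx.2.2]⟩⟩
    · exact Or.inl ⟨⟨x, by simp [mem_inter, hx.1, hx.2.1]⟩, ⟨y, by simp [mem_sdiff, hy.1, hyA]⟩⟩
  · by_cases hyB : y ∈ B
    · exact Or.inl ⟨⟨y, by simp [mem_inter, hy.1, hy.2 hyB]⟩,
        ⟨x, by simp [mem_sdiff, hx.1, hx.2.2]⟩⟩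
    · exact Or.inr ⟨⟨x, by simp [mem_inter, hx.1, hx.2.1]⟩, ⟨y, by simp [mem_sdiff, hy.1, hyB]⟩⟩

lemma indC_inter_union (h A B : Finset V) :
    indC h (A ∩ B) + indC h (A ∪ B) ≤ indC h A + indC h B := by
  unfold indC
  by_cases p : crossP h (A ∩ B) <;> by_cases q : crossP h (A ∪ B)
  · obtain ⟨r, s⟩ := cross_both_inter_union p q
    simp [p, q, r, s]
  · rcases cross_or_inter_union (Or.inl p) with r | r <;>
      simp only [if_pos p, if_neg q, if_pos r] <;> split_ifs <;> norm_num
  · rcases cross_or_inter_union (Or.inr q) with r | r <;>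
      simp only [if_neg p, if_pos q, if_pos r] <;> split_ifs <;> norm_num
  · simp only [if_neg p, if_neg q] ; split_ifs <;> norm_num

lemma indC_sdiff (h A B : Finset V) :
    indC h (A \ B) + indC h (B \ A) ≤ indC h A + indC h B := by
  unfold indC
  by_cases p : crossP h (A \ B) <;> by_cases q : crossP h (B \ A)
  · obtain ⟨r, s⟩ := cross_both_sdiff p q
    simp [p, q, r, s]
  · rcases cross_or_sdiff (Or.inl p) with r | r <;>
      simp only [if_pos p, if_neg q, if_pos r] <;> split_ifs <;> norm_num
  · rcases cross_or_sdiff (Or.inr q) with r | r <;>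
      simp only [if_neg p, if_pos q, if_pos r] <;> split_ifs <;> norm_num
  · simp only [if_neg p, if_neg q] ; split_ifs <;> norm_num

lemma hyperCut_eq_sum {ι : Type*} [Fintype ι] (H : ι → Finset V) (S : Finset V) :
    hyperCut H S = ∑ i, indC (H i) S := by
  unfold hyperCut indC crossP
  rw [Finset.card_filter]
  push_cast
  simp [apply_ite (fun n : ℕ => (n : ℤ))]

end Aux

/-- If `f` is skew-supermodular and `F` is a finite multiset of hyperedges on `V` (each a
nonempty subset of `V`), then the residual function `g(S) = f(S) - |δ_F(S)|` is
skew-supermodular. -/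
theorem stmt5 {V ι : Type*} [Fintype V] [DecidableEq V] [Fintype ι]
    (f : Finset V → ℤ) (hf : SkewSupermodular f)
    (H : ι → Finset V) (hH : ∀ i, (H i).Nonempty) :
    SkewSupermodular (fun S => f S - hyperCut H S) := by
  intro A B
  rcases hf A B with hfAB | hfAB
  · left
    have hc : hyperCut H (A ∩ B) + hyperCut H (A ∪ B) ≤ hyperCut H A + hyperCut H B := by
      simp only [hyperCut_eq_sum, ← Finset.sum_add_distrib]
      exact Finset.sum_le_sum fun i _ => indC_inter_union (H i) A B
    simp only
    linarith
  · right
    have hc : hyperCut H (A \ B) + hyperCut H (B \ A) ≤ hyperCut H A + hyperCut H B := by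
      simp only [hyperCut_eq_sum, ← Finset.sum_add_distrib]
      exact Finset.sum_le_sum fun i _ => indC_sdiff (H i) A B
    simp only
    linarith
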